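/- A compact metric G-space K has the concentration property if and only if K contains a G-fixed point, i.e., a point κ with g·κ = κ for all g ∈ G. -/
import Mathlib


open Metric Pointwise

/-- A subset `A` of a metric `G`-space is essential if for every `ε > 0` and every
finite collection of group elements, the translates of the `ε`-neighbourhood of `A`
have a common point. -/
def Essential (G : Type*) {X : Type*} [Group G] [PseudoMetricSpace X] [MulAction G X]
    (A : Set X) : Prop :=
  ∀ ε > (0 : ℝ), ∀ T : Finset G, (⋂ g ∈ T, g • thickening ε A).Nonempty

/-- A metric `G`-space has the concentration property if every finite cover
contains an essential set. -/
def ConcProp (G : Type*) (X : Type*) [Group G] [PseudoMetricSpace X] [MulAction G X] :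
    Prop :=
  ∀ C : Finset (Set X), ⋃₀ (C : Set (Set X)) = Set.univ → ∃ A ∈ C, Essential G A

/-- Approximate fixed points from the concentration property. -/
lemma conc_approx {G K : Type*} [Group G] [MetricSpace K] [CompactSpace K] [MulAction G K]
    (hC : ConcProp G K) {ε : ℝ} (hε : 0 < ε) (T : Finset G) :
    ∃ x : K, ∀ g ∈ T, dist (g • x) x ≤ ε := by
  classical
  set δ := ε / 6 with hδdef
  have hδ : 0 < δ := by positivity
  obtain ⟨s, -, hfin, hcov⟩ := finite_cover_balls_of_compact (isCompact_univ (X := K)) hδ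
  set C : Finset (Set K) := hfin.toFinset.image (fun x => ball x δ) with hCdef
  have hcover : ⋃₀ (C : Set (Set K)) = Set.univ := by
    apply Set.eq_univ_of_univ_subset
    intro y hy
    obtain ⟨x, hx, hyx⟩ := Set.mem_iUnion₂.1 (hcov hy)
    exact ⟨ball x δ, Finset.mem_coe.2 (Finset.mem_image.2 ⟨x, hfin.mem_toFinset.2 hx, rfl⟩), hyx⟩
  obtain ⟨A, hA, hEss⟩ := hC C hcover
  obtain ⟨x₀, -, rfl⟩ := Finset.mem_image.1 hA
  obtain ⟨y, hy⟩ := hEss δ hδ (insert 1 (T.image (·⁻¹)))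
  have hy' : ∀ g ∈ insert (1:G) (T.image (·⁻¹)), y ∈ g • thickening δ (ball x₀ δ) := by
    intro g hg; exact Set.mem_iInter₂.1 hy g hg
  have key : ∀ z ∈ thickening δ (ball x₀ δ), dist z x₀ < 2 * δ := by
    intro z hz
    obtain ⟨w, hw, hzw⟩ := mem_thickening_iff.1 hz
    calc dist z x₀ ≤ dist z w + dist w x₀ := dist_triangle _ _ _
      _ < δ + δ := add_lt_add hzw hw
      _ = 2 * δ := by ring
  have hy1 : dist y x₀ < 2 * δ := by
    have := hy' 1 (Finset.mem_insert_self _ _)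
    rw [one_smul] at this
    exact key y this
  refine ⟨y, fun g hg => ?_⟩
  have hginv : (g⁻¹ : G) ∈ insert (1:G) (T.image (·⁻¹)) :=
    Finset.mem_insert_of_mem (Finset.mem_image.2 ⟨g, hg, rfl⟩)
  have : g • y ∈ thickening δ (ball x₀ δ) := by
    have := hy' g⁻¹ hginv
    rwa [Set.mem_inv_smul_set_iff] at this
  have h2 : dist (g • y) x₀ < 2 * δ := key _ this
  have : dist (g • y) y ≤ dist (g • y) x₀ + dist x₀ y := dist_triangle _ _ _
  rw [dist_comm x₀ y] at this
  nlinarith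

/-- A compact metric `G`-space (with `G` acting by uniformly continuous maps) has the
concentration property if and only if it has a `G`-fixed point. -/
theorem concProp_iff_fixed_point {G K : Type*} [Group G] [MetricSpace K]
    [CompactSpace K] [MulAction G K]
    (hG : ∀ g : G, UniformContinuous (fun x : K => g • x)) :
    ConcProp G K ↔ ∃ κ : K, ∀ g : G, g • κ = κ := by
  classical
  constructor
  · intro hC
    set t : ℕ × Finset G → Set K :=
      fun p => {x | ∀ g ∈ p.2, dist (g • x) x ≤ 1 / (p.1 + 1)} with htdef
    have htcl : ∀ p, IsClosed (t p) := by
      intro p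
      have : t p = ⋂ g ∈ p.2, {x : K | dist (g • x) x ≤ 1 / (p.1 + 1)} := by
        ext x; simp [htdef]
      rw [this]
      exact isClosed_biInter fun g _ =>
        isClosed_le (Continuous.dist (hG g).continuous continuous_id) continuous_const
    have htn : ∀ p, (t p).Nonempty := by
      intro p
      have hpos : (0:ℝ) < 1 / (p.1 + 1) := by positivity
      obtain ⟨x, hx⟩ := conc_approx hC hpos p.2
      exact ⟨x, hx⟩
    have hd : Directed (· ⊇ ·) t := by
      intro p q
      refine ⟨(max p.1 q.1, p.2 ∪ q.2), ?_, ?_⟩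
      · intro x hx g hg
        refine le_trans (hx g (Finset.mem_union_left _ hg)) ?_
        apply one_div_le_one_div_of_le (by positivity)
        have : (p.1 : ℝ) ≤ max p.1 q.1 := by exact_mod_cast le_max_left _ _
        linarith
      · intro x hx g hg
        refine le_trans (hx g (Finset.mem_union_right _ hg)) ?_
        apply one_div_le_one_div_of_le (by positivity)
        have : (q.1 : ℝ) ≤ max p.1 q.1 := by exact_mod_cast le_max_right _ _
        linarith
    obtain ⟨κ, hκ⟩ := IsCompact.nonempty_iInter_of_directed_nonempty_isCompact_isClosed
      t hd htn (fun p => (htcl p).isCompact) htcl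
    refine ⟨κ, fun g => ?_⟩
    have hall : ∀ n : ℕ, dist (g • κ) κ ≤ 1 / (n + 1) := by
      intro n
      exact Set.mem_iInter.1 hκ (n, {g}) g (Finset.mem_singleton_self g)
    rw [← dist_eq_zero]
    by_contra hne
    have hpos : 0 < dist (g • κ) κ := lt_of_le_of_ne dist_nonneg (Ne.symm hne)
    obtain ⟨n, hn⟩ := exists_nat_one_div_lt hpos
    exact absurd (hall n) (not_le.2 hn)
  · rintro ⟨κ, hκ⟩ C hcov
    have hκmem : κ ∈ ⋃₀ (C : Set (Set K)) := hcov ▸ Set.mem_univ κ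
    obtain ⟨A, hA, hκA⟩ := hκmem
    refine ⟨A, hA, fun ε hε T => ⟨κ, Set.mem_iInter₂.2 fun g _ => ?_⟩⟩
    rw [Set.mem_smul_set_iff_inv_smul_mem, hκ g⁻¹]
    exact self_subset_thickening hε A hκA
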